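/- Let A ⊂ ℝ^{n+1}_+ and a > 0, and let E_a := {𝐱 ∈ ℝ^{n+1}_+ : ρ(𝐱, A) < a} be the hyperbolic a-neighborhood of A. Then there exist constants δ, δ' ∈ (0, 1/10), depending only on a, such that for every 𝐳 ∈ E_a, |B_ρ(𝐳, δ) ∩ E_a| ≥ δ' |B_ρ(𝐳, δ)|, where |·| denotes (n+1)-dimensional Lebesgue measure. -/

import Mathlib

open MeasureTheory

noncomputable section
/-- `arccosh t = log (t + √(t² - 1))` (for `t ≥ 1`). -/
def arccosh (t : ℝ) : ℝ := Real.log (t + Real.sqrt (t ^ 2 - 1))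

/-- The Poincaré hyperbolic metric on the upper half-space `ℝ^n × (0,∞)`:
`ρ(p,q) = arccosh(1 + |p-q|²/(2 p_{n+1} q_{n+1}))`, with `|p-q|` the Euclidean distance. -/
def hypDist {n : ℕ} (p q : EuclideanSpace ℝ (Fin n) × ℝ) : ℝ :=
  arccosh (1 + (‖p.1 - q.1‖ ^ 2 + (p.2 - q.2) ^ 2) / (2 * p.2 * q.2))
end


open Pointwise

namespace S19

noncomputable def nrm {n : ℕ} (v : EuclideanSpace ℝ (Fin n) × ℝ) : ℝ :=
  Real.sqrt (‖v.1‖ ^ 2 + v.2 ^ 2)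

variable {n : ℕ}

lemma arccosh_cosh {s : ℝ} (hs : 0 ≤ s) : arccosh (Real.cosh s) = s := by
  unfold arccosh
  have h1 : Real.cosh s ^ 2 - 1 = Real.sinh s ^ 2 := by
    have := Real.cosh_sq s; linarith
  rw [h1, Real.sqrt_sq (Real.sinh_nonneg_iff.2 hs), Real.cosh_add_sinh, Real.log_exp]

lemma arccosh_lt_arccosh {t u : ℝ} (ht : 1 ≤ t) (h : t < u) : arccosh t < arccosh u := by
  unfold arccosh
  have h0 : (0:ℝ) < t + Real.sqrt (t ^ 2 - 1) := by positivity
  apply Real.log_lt_log h0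
  have : Real.sqrt (t ^ 2 - 1) ≤ Real.sqrt (u ^ 2 - 1) := by
    apply Real.sqrt_le_sqrt; nlinarith
  linarith

lemma arccosh_le_arccosh {t u : ℝ} (ht : 1 ≤ t) (h : t ≤ u) : arccosh t ≤ arccosh u := by
  rcases eq_or_lt_of_le h with rfl | h'
  · rfl
  · exact (arccosh_lt_arccosh ht h').le

lemma arccosh_lt_iff {T s : ℝ} (hT : 1 ≤ T) (hs : 0 < s) : arccosh T < s ↔ T < Real.cosh s := by
  constructor
  · intro h; by_contra hc; push_neg at hc
    have := arccosh_le_arccosh (Real.one_le_cosh s) hc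
    rw [arccosh_cosh hs.le] at this; linarith
  · intro h
    have := arccosh_lt_arccosh hT h
    rwa [arccosh_cosh hs.le] at this



lemma nrm_nonneg (v : EuclideanSpace ℝ (Fin n) × ℝ) : 0 ≤ nrm v := Real.sqrt_nonneg _

lemma nrm_lt_iff {v : EuclideanSpace ℝ (Fin n) × ℝ} {r : ℝ} (hr : 0 < r) :
    nrm v < r ↔ ‖v.1‖ ^ 2 + v.2 ^ 2 < r ^ 2 := Real.sqrt_lt' hr

lemma nrm_neg (v : EuclideanSpace ℝ (Fin n) × ℝ) : nrm (-v) = nrm v := by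
  simp [nrm]

lemma nrm_smul (r : ℝ) (v : EuclideanSpace ℝ (Fin n) × ℝ) : nrm (r • v) = |r| * nrm v := by
  simp only [nrm, Prod.smul_fst, Prod.smul_snd, norm_smul, Real.norm_eq_abs, smul_eq_mul,
    mul_pow]
  rw [show |r| ^ 2 * ‖v.1‖ ^ 2 + r ^ 2 * v.2 ^ 2 = r ^ 2 * (‖v.1‖ ^ 2 + v.2 ^ 2) by
    rw [sq_abs]; ring, Real.sqrt_mul (by positivity), Real.sqrt_sq_eq_abs]

lemma sqrt_tri (a b c d : ℝ) (ha : 0 ≤ a) (hb : 0 ≤ b) :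
    Real.sqrt ((a + b) ^ 2 + (c + d) ^ 2) ≤ Real.sqrt (a ^ 2 + c ^ 2) + Real.sqrt (b ^ 2 + d ^ 2) := by
  set x := Real.sqrt (a ^ 2 + c ^ 2) with hx
  set y := Real.sqrt (b ^ 2 + d ^ 2) with hy
  have hx0 : 0 ≤ x := Real.sqrt_nonneg _
  have hy0 : 0 ≤ y := Real.sqrt_nonneg _
  have hx2 : x ^ 2 = a ^ 2 + c ^ 2 := Real.sq_sqrt (by positivity)
  have hy2 : y ^ 2 = b ^ 2 + d ^ 2 := Real.sq_sqrt (by positivity)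
  have key : a * b + c * d ≤ x * y := by
    nlinarith [sq_nonneg (a * d - b * c), sq_nonneg (x * y - a * b - c * d), mul_nonneg hx0 hy0,
      sq_nonneg (x * y + a * b + c * d)]
  have : (a + b) ^ 2 + (c + d) ^ 2 ≤ (x + y) ^ 2 := by nlinarith
  calc Real.sqrt ((a + b) ^ 2 + (c + d) ^ 2) ≤ Real.sqrt ((x + y) ^ 2) := Real.sqrt_le_sqrt this
    _ = x + y := Real.sqrt_sq (by positivity)

lemma nrm_add_le (u v : EuclideanSpace ℝ (Fin n) × ℝ) : nrm (u + v) ≤ nrm u + nrm v := by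
  have h1 : Real.sqrt (‖(u + v).1‖ ^ 2 + ((u + v).2) ^ 2)
      ≤ Real.sqrt ((‖u.1‖ + ‖v.1‖) ^ 2 + (u.2 + v.2) ^ 2) := by
    apply Real.sqrt_le_sqrt
    have := norm_add_le u.1 v.1
    have h2 : ‖(u+v).1‖ ^ 2 ≤ (‖u.1‖ + ‖v.1‖) ^ 2 := by
      apply pow_le_pow_left₀ (norm_nonneg _) _ 2
      simpa using this
    simp only [Prod.snd_add] at *
    linarith
  calc nrm (u + v) ≤ Real.sqrt ((‖u.1‖ + ‖v.1‖) ^ 2 + (u.2 + v.2) ^ 2) := h1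
    _ ≤ _ := sqrt_tri _ _ _ _ (norm_nonneg _) (norm_nonneg _)





def EBall (c : EuclideanSpace ℝ (Fin n) × ℝ) (r : ℝ) : Set (EuclideanSpace ℝ (Fin n) × ℝ) :=
  {w | nrm (w - c) < r}

instance : (volume : Measure (EuclideanSpace ℝ (Fin n) × ℝ)).IsAddHaarMeasure := by
  rw [show (volume : Measure (EuclideanSpace ℝ (Fin n) × ℝ))
      = (volume : Measure (EuclideanSpace ℝ (Fin n))).prod volume from rfl]
  infer_instance

lemma EBall_eq_smul (c : EuclideanSpace ℝ (Fin n) × ℝ) {r : ℝ} (hr : 0 < r) :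
    EBall c r = c +ᵥ r • EBall (0 : EuclideanSpace ℝ (Fin n) × ℝ) 1 := by
  ext w
  simp only [EBall, Set.mem_setOf_eq, Set.mem_vadd_set, Set.mem_smul_set, vadd_eq_add]
  constructor
  · intro h
    refine ⟨r • (r⁻¹ • (w - c)), ⟨r⁻¹ • (w - c), ?_, rfl⟩, ?_⟩
    · simp only [Set.mem_setOf_eq, sub_zero, nrm_smul, abs_inv, abs_of_pos hr]
      rw [inv_mul_lt_iff₀ hr, mul_one]
      exact h
    · rw [smul_inv_smul₀ hr.ne']; abel
  · rintro ⟨-, ⟨u, hu, rfl⟩, rfl⟩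
    simp only [Set.mem_setOf_eq, sub_zero] at hu
    have : c + r • u - c = r • u := by abel
    rw [this, nrm_smul, abs_of_pos hr]
    calc r * nrm u < r * 1 := by exact (mul_lt_mul_iff_right₀ hr).2 hu
      _ = r := mul_one r

lemma vol_EBall (c : EuclideanSpace ℝ (Fin n) × ℝ) {r : ℝ} (hr : 0 < r) :
    volume (EBall c r) = ENNReal.ofReal (r ^ (n + 1)) *
      volume (EBall (0 : EuclideanSpace ℝ (Fin n) × ℝ) 1) := by
  rw [EBall_eq_smul c hr, measure_vadd, Measure.addHaar_smul]
  have hfr : Module.finrank ℝ (EuclideanSpace ℝ (Fin n) × ℝ) = n + 1 := by simp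
  rw [hfr, abs_of_pos (pow_pos hr _)]

lemma setEq (z : EuclideanSpace ℝ (Fin n) × ℝ) (hz : 0 < z.2) {s : ℝ} (hs : 0 < s) :
    {w : EuclideanSpace ℝ (Fin n) × ℝ | 0 < w.2 ∧ hypDist z w < s}
      = EBall (z.1, z.2 * Real.cosh s) (z.2 * Real.sinh s) := by
  have hsinh : 0 < Real.sinh s := Real.sinh_pos_iff.2 hs
  have hrad : 0 < z.2 * Real.sinh s := by positivity
  have hid : Real.cosh s ^ 2 = Real.sinh s ^ 2 + 1 := Real.cosh_sq s
  have hcs : Real.cosh s - Real.sinh s = Real.exp (-s) := Real.cosh_sub_sinh s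
  have hexp : Real.exp (-s) > 0 := Real.exp_pos _
  ext w
  simp only [Set.mem_setOf_eq, EBall, nrm_lt_iff hrad]
  have hfst : (w - (z.1, z.2 * Real.cosh s)).1 = w.1 - z.1 := rfl
  have hsnd : (w - (z.1, z.2 * Real.cosh s)).2 = w.2 - z.2 * Real.cosh s := rfl
  rw [hfst, hsnd]
  unfold hypDist
  have hnrev : ‖z.1 - w.1‖ = ‖w.1 - z.1‖ := norm_sub_rev _ _
  have key : ∀ w2 : ℝ, ‖w.1 - z.1‖ ^ 2 + (w2 - z.2 * Real.cosh s) ^ 2 - (z.2 * Real.sinh s) ^ 2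
      = (‖w.1 - z.1‖ ^ 2 + (z.2 - w2) ^ 2) - 2 * z.2 * w2 * (Real.cosh s - 1) := by
    intro w2; linear_combination (z.2 ^ 2) * hid
  constructor
  · rintro ⟨hw, hd⟩
    have hden : 0 < 2 * z.2 * w.2 := by positivity
    have hT : (1:ℝ) ≤ 1 + (‖z.1 - w.1‖ ^ 2 + (z.2 - w.2) ^ 2) / (2 * z.2 * w.2) := by
      have : 0 ≤ (‖z.1 - w.1‖ ^ 2 + (z.2 - w.2) ^ 2) / (2 * z.2 * w.2) := by positivity
      linarith
    rw [arccosh_lt_iff hT hs] at hd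
    have hQ : ‖w.1 - z.1‖ ^ 2 + (z.2 - w.2) ^ 2 < 2 * z.2 * w.2 * (Real.cosh s - 1) := by
      rw [hnrev] at hd
      have := (div_lt_iff₀ hden).1 (by linarith : (‖w.1 - z.1‖ ^ 2 + (z.2 - w.2) ^ 2) / (2 * z.2 * w.2) < Real.cosh s - 1)
      linarith
    linarith [key w.2, hQ]
  · intro h
    have hv2 : (w.2 - z.2 * Real.cosh s) ^ 2 < (z.2 * Real.sinh s) ^ 2 := by
      nlinarith [norm_nonneg (w.1 - z.1), sq_nonneg ‖w.1 - z.1‖]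
    have h5 : Real.sinh s ^ 2 < Real.cosh s ^ 2 := by
      nlinarith [hcs, hexp, Real.cosh_pos (x := s), hsinh]
    have hw : 0 < w.2 := by
      by_contra hneg
      push_neg at hneg
      have h6 : 0 ≤ z.2 * Real.cosh s * (-w.2) :=
        mul_nonneg (mul_nonneg hz.le (Real.cosh_pos (x := s)).le) (by linarith)
      have h7 : 0 < z.2 ^ 2 * (Real.cosh s ^ 2 - Real.sinh s ^ 2) :=
        mul_pos (by positivity) (by linarith)
      nlinarith [hv2, h6, h7, sq_nonneg w.2]
    refine ⟨hw, ?_⟩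
    have hden : 0 < 2 * z.2 * w.2 := by positivity
    have hT : (1:ℝ) ≤ 1 + (‖z.1 - w.1‖ ^ 2 + (z.2 - w.2) ^ 2) / (2 * z.2 * w.2) := by
      have : 0 ≤ (‖z.1 - w.1‖ ^ 2 + (z.2 - w.2) ^ 2) / (2 * z.2 * w.2) := by positivity
      linarith
    rw [arccosh_lt_iff hT hs, hnrev]
    have hQ : ‖w.1 - z.1‖ ^ 2 + (z.2 - w.2) ^ 2 < 2 * z.2 * w.2 * (Real.cosh s - 1) := by
      linarith [key w.2, h]
    have h8 : (‖w.1 - z.1‖ ^ 2 + (z.2 - w.2) ^ 2) / (2 * z.2 * w.2) < Real.cosh s - 1 :=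
      (div_lt_iff₀ hden).2 (by linarith)
    linarith

lemma hypDist_comm (p q : EuclideanSpace ℝ (Fin n) × ℝ) : hypDist p q = hypDist q p := by
  unfold hypDist
  rw [norm_sub_rev]
  ring_nf

lemma heightLB (z w : EuclideanSpace ℝ (Fin n) × ℝ) (hz : 0 < z.2) (hw : 0 < w.2)
    {a : ℝ} (ha : 0 < a) (h : hypDist z w < a) : z.2 * Real.exp (-a) < w.2 := by
  unfold hypDist at h
  have hden : 0 < 2 * z.2 * w.2 := by positivity
  have hT : (1:ℝ) ≤ 1 + (‖z.1 - w.1‖ ^ 2 + (z.2 - w.2) ^ 2) / (2 * z.2 * w.2) := by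
    have : 0 ≤ (‖z.1 - w.1‖ ^ 2 + (z.2 - w.2) ^ 2) / (2 * z.2 * w.2) := by positivity
    linarith
  rw [arccosh_lt_iff hT ha] at h
  have hQ : (z.2 - w.2) ^ 2 < 2 * z.2 * w.2 * (Real.cosh a - 1) := by
    have h2 := (div_lt_iff₀ hden).1 (by linarith : (‖z.1 - w.1‖ ^ 2 + (z.2 - w.2) ^ 2) / (2 * z.2 * w.2) < Real.cosh a - 1)
    nlinarith [sq_nonneg ‖z.1 - w.1‖]
  have hcosh : Real.cosh a = (Real.exp a + Real.exp (-a)) / 2 := Real.cosh_eq a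
  have hprod : Real.exp a * Real.exp (-a) = 1 := by rw [← Real.exp_add]; simp
  have hu1 : 1 < Real.exp a := by
    have := Real.add_one_lt_exp (by linarith : a ≠ 0); linarith
  have hv : 0 < Real.exp (-a) := Real.exp_pos _
  by_contra hc
  push_neg at hc
  have h3 : w.2 * Real.exp a ≤ z.2 := by
    have := mul_le_mul_of_nonneg_right hc (le_of_lt (Real.exp_pos a))
    calc w.2 * Real.exp a ≤ z.2 * Real.exp (-a) * Real.exp a := this
      _ = z.2 := by rw [mul_assoc, mul_comm (Real.exp (-a)), hprod, mul_one]
  have h4 : w.2 * Real.exp (-a) ≤ z.2 := by nlinarith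
  have hp2 : w.2 ^ 2 * (Real.exp a * Real.exp (-a)) = w.2 ^ 2 := by rw [hprod]; ring
  have hc2 : 2 * z.2 * w.2 * Real.cosh a = z.2 * w.2 * (Real.exp a + Real.exp (-a)) := by
    rw [hcosh]; ring
  nlinarith [mul_nonneg (sub_nonneg.2 h3) (sub_nonneg.2 h4), hp2, hQ, hc2]

end S19

open S19 in
set_option maxHeartbeats 2000000 in
/-- hyperbolic neighborhoods `E_a = {x : ρ(x,A) < a}` of subsets of the upper
half-space have the interior density property ("Property I") with constants
`δ, δ' ∈ (0,1/10)` depending only on `a`: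
`|B_ρ(z,δ) ∩ E_a| ≥ δ' |B_ρ(z,δ)|` for every `z ∈ E_a`. -/
theorem stmt19 (n : ℕ) (hn : 1 ≤ n) (a : ℝ) (ha : 0 < a) :
    ∃ δ δ' : ℝ, 0 < δ ∧ δ < 1 / 10 ∧ 0 < δ' ∧ δ' < 1 / 10 ∧
      ∀ A : Set (EuclideanSpace ℝ (Fin n) × ℝ),
        A ⊆ {p : EuclideanSpace ℝ (Fin n) × ℝ | 0 < p.2} →
        ∀ z ∈ {p : EuclideanSpace ℝ (Fin n) × ℝ | 0 < p.2 ∧ ∃ w ∈ A, hypDist p w < a},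
          ENNReal.ofReal δ' *
              volume {w : EuclideanSpace ℝ (Fin n) × ℝ | 0 < w.2 ∧ hypDist z w < δ} ≤
            volume ({w : EuclideanSpace ℝ (Fin n) × ℝ | 0 < w.2 ∧ hypDist z w < δ} ∩
              {p : EuclideanSpace ℝ (Fin n) × ℝ | 0 < p.2 ∧ ∃ w ∈ A, hypDist p w < a}) := by
  have hδ : (0:ℝ) < 1/20 := by norm_num
  have hsinhδ : 0 < Real.sinh (1/20) := Real.sinh_pos_iff.2 hδ
  have hsinha : 0 < Real.sinh a := Real.sinh_pos_iff.2 ha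
  have hcoshδ : 1 ≤ Real.cosh (1/20) := Real.one_le_cosh _
  have heδ : Real.exp (-(1/20:ℝ)) < 1 := by
    calc Real.exp (-(1/20:ℝ)) < Real.exp 0 := Real.exp_lt_exp.2 (by norm_num)
      _ = 1 := Real.exp_zero
  set κ : ℝ := min (Real.exp (-a) * Real.sinh a) ((1 - Real.exp (-(1/20:ℝ)))/2) with hκdef
  have hκ : 0 < κ := lt_min (by positivity) (by linarith)
  set δ' : ℝ := min (1/20) ((κ / Real.sinh (1/20)) ^ (n+1)) with hδ'def
  have hδ'pos : 0 < δ' := lt_min (by norm_num) (by positivity)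
  refine ⟨1/20, δ', hδ, by norm_num, hδ'pos,
    lt_of_le_of_lt (min_le_left _ _) (by norm_num), ?_⟩
  intro A hA z hzmem
  obtain ⟨hz2, w, hwA, hzw⟩ := hzmem
  have hw2 : 0 < w.2 := hA hwA
  set c2 : EuclideanSpace ℝ (Fin n) × ℝ := (z.1, z.2 * Real.cosh (1/20)) with hc2def
  set r2 : ℝ := z.2 * Real.sinh (1/20) with hr2def
  set c1 : EuclideanSpace ℝ (Fin n) × ℝ := (w.1, w.2 * Real.cosh a) with hc1def
  set R1 : ℝ := w.2 * Real.sinh a with hR1def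
  have hr2pos : 0 < r2 := mul_pos hz2 hsinhδ
  have hR1pos : 0 < R1 := mul_pos hw2 hsinha
  have hSeq : {w' : EuclideanSpace ℝ (Fin n) × ℝ | 0 < w'.2 ∧ hypDist z w' < 1/20}
      = EBall c2 r2 := setEq z hz2 hδ
  have hE1 : EBall c1 R1 ⊆ {p : EuclideanSpace ℝ (Fin n) × ℝ | 0 < p.2 ∧ ∃ w ∈ A, hypDist p w < a} := by
    intro p hp
    rw [← setEq w hw2 ha] at hp
    exact ⟨hp.1, w, hwA, by rw [hypDist_comm]; exact hp.2⟩
  have hz1 : z ∈ EBall c1 R1 := by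
    rw [← setEq w hw2 ha]
    exact ⟨hz2, by rw [hypDist_comm]; exact hzw⟩
  have hd1R : nrm (z - c1) < R1 := hz1
  have hd2 : nrm (z - c2) = z.2 * (Real.cosh (1/20) - 1) := by
    have h1 : (z - c2).1 = z.1 - z.1 := rfl
    have h2 : (z - c2).2 = z.2 - z.2 * Real.cosh (1/20) := rfl
    unfold S19.nrm
    rw [h1, h2, sub_self, norm_zero]
    rw [show (0:ℝ)^2 + (z.2 - z.2 * Real.cosh (1/20))^2 = (z.2 * (Real.cosh (1/20) - 1))^2 by ring]
    exact Real.sqrt_sq (by nlinarith)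
  set e2 : ℝ := z.2 * (1 - Real.exp (-(1/20:ℝ))) with he2def
  have he2 : 0 < e2 := mul_pos hz2 (by linarith)
  have hsum : z.2 * (Real.cosh (1/20) - 1) + e2 = r2 := by
    have hcs := Real.cosh_sub_sinh (1/20 : ℝ)
    rw [he2def, hr2def]
    linear_combination z.2 * hcs
  set s : ℝ := min R1 (e2/2) with hsdef
  have hs : 0 < s := lt_min hR1pos (by linarith)
  have hsle : s ≤ e2/2 := min_le_right _ _
  have hheight : z.2 * Real.exp (-a) < w.2 := heightLB z w hz2 hw2 ha hzw
  have hsl : z.2 * κ ≤ s := by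
    apply le_min
    · calc z.2 * κ ≤ z.2 * (Real.exp (-a) * Real.sinh a) :=
          mul_le_mul_of_nonneg_left (min_le_left _ _) hz2.le
        _ = (z.2 * Real.exp (-a)) * Real.sinh a := by ring
        _ ≤ w.2 * Real.sinh a := mul_le_mul_of_nonneg_right hheight.le hsinha.le
    · calc z.2 * κ ≤ z.2 * ((1 - Real.exp (-(1/20:ℝ)))/2) :=
          mul_le_mul_of_nonneg_left (min_le_right _ _) hz2.le
        _ = e2/2 := by rw [he2def]; ring
  have hexists : ∃ p : EuclideanSpace ℝ (Fin n) × ℝ,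
      EBall p s ⊆ EBall c2 r2 ∩ EBall c1 R1 := by
    by_cases hcase : nrm (z - c1) ≤ e2/2
    · refine ⟨c1, fun q hq => ?_⟩
      have hq' : nrm (q - c1) < s := hq
      have hc1z : nrm (c1 - z) = nrm (z - c1) := by
        rw [show c1 - z = -(z - c1) by abel, nrm_neg]
      constructor
      · show nrm (q - c2) < r2
        have t1 : q - c2 = (q - c1) + (c1 - z) + (z - c2) := by abel
        have t2 := nrm_add_le ((q - c1) + (c1 - z)) (z - c2)
        have t3 := nrm_add_le (q - c1) (c1 - z)
        rw [t1]
        have : nrm (q - c2 + (c2 - c2)) ≤ nrm (q - c1) + nrm (c1 - z) + nrm (z - c2) := by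
          simp only [sub_self, add_zero]
          rw [t1]; linarith [nrm_nonneg (z - c2)]
        calc nrm ((q - c1) + (c1 - z) + (z - c2))
            ≤ nrm (q - c1) + nrm (c1 - z) + nrm (z - c2) := by linarith
          _ < s + e2/2 + z.2 * (Real.cosh (1/20) - 1) := by
              rw [hc1z, hd2]; linarith
          _ ≤ r2 := by linarith
      · show nrm (q - c1) < R1
        calc nrm (q - c1) < s := hq'
          _ ≤ R1 := min_le_left _ _
    · push_neg at hcase
      have hd1pos : 0 < nrm (z - c1) := lt_trans (by linarith) hcase
      set μ : ℝ := e2 / (2 * nrm (z - c1)) with hμdef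
      have hμpos : 0 < μ := by positivity
      have hμlt : μ < 1 := by
        rw [hμdef, div_lt_one (by positivity)]
        linarith
      refine ⟨z + μ • (c1 - z), fun q hq => ?_⟩
      have hq' : nrm (q - (z + μ • (c1 - z))) < s := hq
      have hpz : z + μ • (c1 - z) - z = μ • (c1 - z) := by abel
      have hc1z : nrm (c1 - z) = nrm (z - c1) := by
        rw [show c1 - z = -(z - c1) by abel, nrm_neg]
      have hnpz : nrm (z + μ • (c1 - z) - z) = e2/2 := by
        rw [hpz, nrm_smul, abs_of_pos hμpos, hc1z, hμdef]
        field_simp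
      have hpc1 : z + μ • (c1 - z) - c1 = (1 - μ) • (z - c1) := by
        module
      have hnpc1 : nrm (z + μ • (c1 - z) - c1) = nrm (z - c1) - e2/2 := by
        rw [hpc1, nrm_smul, abs_of_pos (by linarith), hμdef]
        field_simp
      constructor
      · show nrm (q - c2) < r2
        have t1 : q - c2 = (q - (z + μ • (c1 - z))) + (z + μ • (c1 - z) - z) + (z - c2) := by abel
        have t2 := nrm_add_le ((q - (z + μ • (c1 - z))) + (z + μ • (c1 - z) - z)) (z - c2)
        have t3 := nrm_add_le (q - (z + μ • (c1 - z))) (z + μ • (c1 - z) - z)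
        calc nrm (q - c2)
            ≤ nrm (q - (z + μ • (c1 - z))) + nrm (z + μ • (c1 - z) - z) + nrm (z - c2) := by
              rw [t1]; linarith
          _ < s + e2/2 + z.2 * (Real.cosh (1/20) - 1) := by rw [hnpz, hd2]; linarith
          _ ≤ r2 := by linarith
      · show nrm (q - c1) < R1
        have t1 : q - c1 = (q - (z + μ • (c1 - z))) + (z + μ • (c1 - z) - c1) := by abel
        have t3 := nrm_add_le (q - (z + μ • (c1 - z))) (z + μ • (c1 - z) - c1)
        calc nrm (q - c1)
            ≤ nrm (q - (z + μ • (c1 - z))) + nrm (z + μ • (c1 - z) - c1) := by rw [t1]; exact t3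
          _ < s + (nrm (z - c1) - e2/2) := by rw [hnpc1]; linarith
          _ ≤ nrm (z - c1) := by linarith
          _ < R1 := hd1R
  obtain ⟨p, hsub⟩ := hexists
  rw [hSeq]
  have hre : δ' * r2 ^ (n+1) ≤ s ^ (n+1) := by
    have h1 : δ' ≤ (κ / Real.sinh (1/20)) ^ (n+1) := min_le_right _ _
    have h2 : (κ / Real.sinh (1/20)) ^ (n+1) * r2 ^ (n+1) = (z.2 * κ) ^ (n+1) := by
      rw [← mul_pow]
      congr 1
      rw [hr2def]
      field_simp
    calc δ' * r2 ^ (n+1) ≤ (κ / Real.sinh (1/20)) ^ (n+1) * r2 ^ (n+1) :=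
        mul_le_mul_of_nonneg_right h1 (by positivity)
      _ = (z.2 * κ) ^ (n+1) := h2
      _ ≤ s ^ (n+1) := pow_le_pow_left₀ (by positivity) hsl _
  have hss : EBall p s ⊆ EBall c2 r2 ∩
      {p : EuclideanSpace ℝ (Fin n) × ℝ | 0 < p.2 ∧ ∃ w ∈ A, hypDist p w < a} :=
    fun q hq => ⟨(hsub hq).1, hE1 (hsub hq).2⟩
  calc ENNReal.ofReal δ' * volume (EBall c2 r2)
      = ENNReal.ofReal δ' * (ENNReal.ofReal (r2 ^ (n+1)) *
          volume (EBall (0 : EuclideanSpace ℝ (Fin n) × ℝ) 1)) := by rw [vol_EBall c2 hr2pos]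
    _ = ENNReal.ofReal (δ' * r2 ^ (n+1)) *
          volume (EBall (0 : EuclideanSpace ℝ (Fin n) × ℝ) 1) := by
        rw [ENNReal.ofReal_mul hδ'pos.le, mul_assoc]
    _ ≤ ENNReal.ofReal (s ^ (n+1)) *
          volume (EBall (0 : EuclideanSpace ℝ (Fin n) × ℝ) 1) :=
        mul_le_mul_left (ENNReal.ofReal_le_ofReal hre) _
    _ = volume (EBall p s) := (vol_EBall p hs).symm
    _ ≤ _ := measure_mono hss
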